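/- arXiv:math/0310146 — 6 statements merged into one kernel-verified Lean document; each statement's English description precedes it below -/
import Mathlib

section
/- Two commutative rings that are Morita equivalent are isomorphic as rings. -/
open CategoryTheory

universe v u₁ u₂

section TransferEndId

variable {C : Type u₁} {D : Type u₂} [Category.{v} C] [Category.{v} D]
  [Preadditive C] [Preadditive D]

/-- Transfer an endomorphism of the identity functor along an equivalence. -/
def transferEndId (e : C ≌ D) [e.functor.Additive] :
    End (𝟭 C) →+* End (𝟭 D) where
  toFun η :=
    { app := fun Y => e.counitInv.app Y ≫ e.functor.map (η.app (e.inverse.obj Y)) ≫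
        e.counit.app Y
      naturality := by
        intro Y Y' f
        have h1 := e.counitInv.naturality f
        have h2 := η.naturality (e.inverse.map f)
        have h3 := e.counit.naturality f
        simp only [Functor.id_map, Functor.comp_map, Functor.id_obj] at h1 h2 h3
        simp only [Functor.id_obj, Functor.id_map]
        calc f ≫ e.counitInv.app Y' ≫ e.functor.map (η.app (e.inverse.obj Y')) ≫
              e.counit.app Y'
            = (f ≫ e.counitInv.app Y') ≫ e.functor.map (η.app (e.inverse.obj Y')) ≫
              e.counit.app Y' := by simp
          _ = (e.counitInv.app Y ≫ e.functor.map (e.inverse.map f)) ≫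
              e.functor.map (η.app (e.inverse.obj Y')) ≫ e.counit.app Y' := by rw [h1]
          _ = e.counitInv.app Y ≫ e.functor.map (e.inverse.map f ≫
              η.app (e.inverse.obj Y')) ≫ e.counit.app Y' := by
                simp [Functor.map_comp]
          _ = e.counitInv.app Y ≫ e.functor.map (η.app (e.inverse.obj Y) ≫
              e.inverse.map f) ≫ e.counit.app Y' := by rw [h2]
          _ = e.counitInv.app Y ≫ e.functor.map (η.app (e.inverse.obj Y)) ≫
              (e.functor.map (e.inverse.map f) ≫ e.counit.app Y') := by
                simp [Functor.map_comp]
          _ = e.counitInv.app Y ≫ e.functor.map (η.app (e.inverse.obj Y)) ≫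
              (e.counit.app Y ≫ f) := by rw [h3]
          _ = (e.counitInv.app Y ≫ e.functor.map (η.app (e.inverse.obj Y)) ≫
              e.counit.app Y) ≫ f := by simp }
  map_one' := by
    apply NatTrans.ext; funext Y
    simp [End.one_def]
  map_mul' η θ := by
    apply NatTrans.ext; funext Y
    show e.counitInv.app Y ≫ e.functor.map (θ.app (e.inverse.obj Y) ≫
          η.app (e.inverse.obj Y)) ≫ e.counit.app Y
        = (e.counitInv.app Y ≫ e.functor.map (θ.app (e.inverse.obj Y)) ≫ e.counit.app Y) ≫
          (e.counitInv.app Y ≫ e.functor.map (η.app (e.inverse.obj Y)) ≫ e.counit.app Y)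
    calc e.counitInv.app Y ≫ e.functor.map (θ.app (e.inverse.obj Y) ≫
          η.app (e.inverse.obj Y)) ≫ e.counit.app Y
        = e.counitInv.app Y ≫ e.functor.map (θ.app (e.inverse.obj Y)) ≫
          (e.counit.app Y ≫ e.counitInv.app Y) ≫
          e.functor.map (η.app (e.inverse.obj Y)) ≫ e.counit.app Y := by
            simp [Functor.map_comp]
      _ = _ := by simp
  map_zero' := by
    apply NatTrans.ext; funext Y
    simp
  map_add' η θ := by
    apply NatTrans.ext; funext Y
    show e.counitInv.app Y ≫ e.functor.map (η.app (e.inverse.obj Y) +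
          θ.app (e.inverse.obj Y)) ≫ e.counit.app Y
        = (e.counitInv.app Y ≫ e.functor.map (η.app (e.inverse.obj Y)) ≫ e.counit.app Y) +
          (e.counitInv.app Y ≫ e.functor.map (θ.app (e.inverse.obj Y)) ≫ e.counit.app Y)
    simp [NatTrans.app_add, Functor.map_add, Preadditive.comp_add, Preadditive.add_comp]

lemma transferEndId_symm_apply (e : C ≌ D) [e.functor.Additive] (η : End (𝟭 C)) :
    haveI : e.symm.functor.Additive := Equivalence.inverse_additive e
    transferEndId e.symm (transferEndId e η) = η := by
  haveI : e.symm.functor.Additive := Equivalence.inverse_additive e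
  apply NatTrans.ext; funext X
  show e.unit.app X ≫ e.inverse.map (e.counitInv.app (e.functor.obj X) ≫
      e.functor.map (η.app (e.inverse.obj (e.functor.obj X))) ≫
      e.counit.app (e.functor.obj X)) ≫ e.unitInv.app X = η.app X
  have h := η.naturality (e.unitInv.app X)
  simp only [Functor.id_map, Functor.comp_obj, Functor.id_obj] at h
  simp [← h]

end TransferEndId

section ToEndId

variable (R : Type u) [CommRing R]

/-- The canonical ring hom from a commutative ring to the endomorphisms of the
identity functor of its module category. -/
noncomputable def toEndId : R →+* End (𝟭 (ModuleCat.{u} R)) where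
  toFun r := r • 𝟙 (𝟭 (ModuleCat.{u} R))
  map_one' := one_smul _ _
  map_mul' r s := by
    simp [End.mul_def, CategoryTheory.Linear.smul_comp, CategoryTheory.Linear.comp_smul,
      mul_comm r s, mul_smul]
  map_zero' := zero_smul _ _
  map_add' r s := add_smul r s _

lemma toEndId_bijective : Function.Bijective (toEndId R) := by
  constructor
  · intro r s hrs
    have h2 : r • (1 : R) = s • (1 : R) :=
      congrArg (fun η : End (𝟭 (ModuleCat.{u} R)) =>
        η.app (ModuleCat.of R R) (1 : R)) hrs
    simpa using h2
  · intro η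
    refine ⟨η.app (ModuleCat.of R R) (1 : R), ?_⟩
    refine NatTrans.ext (funext fun M => ?_)
    apply ModuleCat.hom_ext; apply LinearMap.ext; intro x
    have h := η.naturality (X := ModuleCat.of R R) (Y := M)
      (ModuleCat.ofHom (LinearMap.toSpanSingleton R M x))
    have h1 : η.app M ((LinearMap.toSpanSingleton R M x) (1 : R)) =
        (LinearMap.toSpanSingleton R M x) (η.app (ModuleCat.of R R) (1 : R)) :=
      congrArg (fun f : ModuleCat.of R R ⟶ M => f (1 : R)) h
    have : (toEndId R (η.app (ModuleCat.of R R) (1 : R))).app M x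
        = η.app (ModuleCat.of R R) (1 : R) • x := rfl
    rw [this]
    simpa [LinearMap.toSpanSingleton_apply] using h1.symm

end ToEndId

/-- Two commutative rings that are Morita equivalent (their module categories are
equivalent) are isomorphic as rings. -/
theorem commRing_isom_of_morita (R S : Type u) [CommRing R] [CommRing S]
    (h : Nonempty (ModuleCat.{u} R ≌ ModuleCat.{u} S)) :
    Nonempty (R ≃+* S) := by
  obtain ⟨e⟩ := h
  haveI : e.functor.Additive := Functor.additive_of_preserves_binary_products _
  haveI : e.symm.functor.Additive := Equivalence.inverse_additive e
  haveI : e.symm.symm.functor.Additive := ‹e.functor.Additive›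
  let eR : R ≃+* End (𝟭 (ModuleCat.{u} R)) :=
    RingEquiv.ofBijective (toEndId R) (toEndId_bijective R)
  let eS : S ≃+* End (𝟭 (ModuleCat.{u} S)) :=
    RingEquiv.ofBijective (toEndId S) (toEndId_bijective S)
  let φ : End (𝟭 (ModuleCat.{u} R)) ≃+* End (𝟭 (ModuleCat.{u} S)) :=
    RingEquiv.ofRingHom (transferEndId e) (transferEndId e.symm)
      (RingHom.ext fun θ => transferEndId_symm_apply e.symm θ)
      (RingHom.ext fun η => transferEndId_symm_apply e η)
  exact ⟨eR.trans (φ.trans eS.symm)⟩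
end

section
/- Let R be a commutative ring and Q an invertible R-module (Q ⊗_R Q' ≅ R for some R-module Q'). Then Q is finitely generated and projective as an R-module. -/
open TensorProduct

/-- Let `R` be a commutative ring and `Q` an invertible `R`-module
(`Q ⊗[R] Q' ≅ R` for some `R`-module `Q'`).  Then `Q` is finitely generated and
projective as an `R`-module. -/
theorem invertible_module_finite_projective (R : Type u) [CommRing R]
    (Q : Type u) [AddCommGroup Q] [Module R Q]
    (h : ∃ (Q' : Type u) (_ : AddCommGroup Q') (_ : Module R Q'),
      Nonempty (Q ⊗[R] Q' ≃ₗ[R] R)) :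
    Module.Finite R Q ∧ Module.Projective R Q := by
  obtain ⟨Q', _, _, ⟨e⟩⟩ := h
  -- every element of `Q ⊗ Q'` equals `e x • e.symm 1`
  have key : ∀ x : Q ⊗[R] Q', x = e x • e.symm 1 := by
    intro x
    rw [← map_smul, smul_eq_mul, mul_one, LinearEquiv.symm_apply_apply]
  obtain ⟨S, hS⟩ := TensorProduct.exists_finset (e.symm 1 : Q ⊗[R] Q')
  have hSone : (∑ p ∈ S, e (p.1 ⊗ₜ[R] p.2)) = 1 := by
    have := congrArg e hS.symm
    simpa [map_sum] using this
  -- for fixed `m' : Q`, the contraction `m ⊗ n ↦ e (m' ⊗ n) • m`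
  let L : Q → Q ⊗[R] Q' →ₗ[R] Q := fun m' =>
    TensorProduct.lift
      { toFun := fun m =>
          { toFun := fun n => e (m' ⊗ₜ[R] n) • m
            map_add' := by intro a b; simp [tmul_add, add_smul]
            map_smul' := by intro r a; simp [tmul_smul, mul_smul] }
        map_add' := by intro a b; ext n; simp [add_smul, smul_add]
        map_smul' := by intro r a; ext n; simp [smul_smul, mul_comm] }
  have Lapply : ∀ (m' m : Q) (n : Q'), L m' (m ⊗ₜ[R] n) = e (m' ⊗ₜ[R] n) • m := by
    intro m' m n; rfl
  -- the fundamental identity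
  have main : ∀ (q m' : Q) (n' : Q'),
      e (m' ⊗ₜ[R] n') • q = ∑ p ∈ S, (e (q ⊗ₜ[R] n') * e (m' ⊗ₜ[R] p.2)) • p.1 := by
    intro q m' n'
    have h2 := congrArg (L m') (key (q ⊗ₜ[R] n'))
    rw [Lapply, map_smul, hS, map_sum] at h2
    rw [h2, Finset.smul_sum]
    refine Finset.sum_congr rfl fun p _ => ?_
    rw [Lapply, smul_smul]
  have dual : ∀ q : Q,
      q = ∑ p ∈ S, (∑ p' ∈ S, e (q ⊗ₜ[R] p'.2) * e (p'.1 ⊗ₜ[R] p.2)) • p.1 := by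
    intro q
    have h3 : ∑ p' ∈ S, e (p'.1 ⊗ₜ[R] p'.2) • q
        = ∑ p' ∈ S, ∑ p ∈ S, (e (q ⊗ₜ[R] p'.2) * e (p'.1 ⊗ₜ[R] p.2)) • p.1 :=
      Finset.sum_congr rfl fun p' _ => main q p'.1 p'.2
    rw [← Finset.sum_smul, hSone, one_smul] at h3
    calc q = ∑ p' ∈ S, ∑ p ∈ S, (e (q ⊗ₜ[R] p'.2) * e (p'.1 ⊗ₜ[R] p.2)) • p.1 := h3
      _ = ∑ p ∈ S, ∑ p' ∈ S, (e (q ⊗ₜ[R] p'.2) * e (p'.1 ⊗ₜ[R] p.2)) • p.1 := Finset.sum_comm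
      _ = ∑ p ∈ S, (∑ p' ∈ S, e (q ⊗ₜ[R] p'.2) * e (p'.1 ⊗ₜ[R] p.2)) • p.1 :=
          Finset.sum_congr rfl fun p _ => (Finset.sum_smul).symm
  -- the splitting maps
  let π : (↥S → R) →ₗ[R] Q :=
    ∑ p : ↥S, (LinearMap.proj p : (↥S → R) →ₗ[R] R).smulRight (p : Q × Q').1
  let σ : Q →ₗ[R] (↥S → R) :=
    LinearMap.pi fun p : ↥S =>
      ∑ p' : ↥S, e ((p' : Q × Q').1 ⊗ₜ[R] (p : Q × Q').2) •
        (e.toLinearMap ∘ₗ (TensorProduct.mk R Q Q').flip (p' : Q × Q').2)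
  have hπσ : ∀ q : Q, π (σ q) = q := by
    intro q
    have hσ : ∀ p : ↥S, σ q p
        = ∑ p' : ↥S, e (q ⊗ₜ[R] (p' : Q × Q').2) * e ((p' : Q × Q').1 ⊗ₜ[R] (p : Q × Q').2) := by
      intro p
      simp [σ, LinearMap.sum_apply, smul_eq_mul, mul_comm]
    have hπ : ∀ v : ↥S → R, π v = ∑ p : ↥S, v p • (p : Q × Q').1 := by
      intro v; simp [π, LinearMap.sum_apply]
    rw [hπ]
    have step : ∑ p : ↥S, σ q p • (p : Q × Q').1
        = ∑ p : ↥S, (∑ p' ∈ S, e (q ⊗ₜ[R] p'.2) * e (p'.1 ⊗ₜ[R] (p : Q × Q').2)) • (p : Q × Q').1 :=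
      Finset.sum_congr rfl fun p _ => by
        rw [hσ, ← Finset.sum_coe_sort S (fun p' => e (q ⊗ₜ[R] p'.2) * e (p'.1 ⊗ₜ[R] (p : Q × Q').2))]
    rw [step, Finset.sum_coe_sort S (fun p => (∑ p' ∈ S, e (q ⊗ₜ[R] p'.2) * e (p'.1 ⊗ₜ[R] p.2)) • p.1)]
    exact (dual q).symm
  have hcomp : π.comp σ = LinearMap.id := by
    ext q; exact hπσ q
  constructor
  · exact Module.Finite.of_surjective π (fun q => ⟨σ q, hπσ q⟩)
  · exact Module.Projective.of_split σ π hcomp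
end

section
/- In the ring R = ℤ[u]/(u² − 5u), the ideal Q = (2, u) generated by 2 and u is an invertible R-module: the evaluation map Hom_R(Q, R) ⊗_R Q → R is an isomorphism. -/
open Polynomial

/-- The ring `R = ℤ[u]/(u² - 5u)`. -/
def MoritaExample.R : Type :=
  Polynomial ℤ ⧸ (Ideal.span {(X : Polynomial ℤ) ^ 2 - 5 * X} : Ideal (Polynomial ℤ))

noncomputable instance : CommRing MoritaExample.R := Ideal.Quotient.commRing _

/-- The image of `u` in `R = ℤ[u]/(u² - 5u)`. -/
noncomputable def MoritaExample.u : MoritaExample.R :=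
  Ideal.Quotient.mk _ (X : Polynomial ℤ)

/-- The ideal `Q = (2, u)` of `R`. -/
noncomputable def MoritaExample.Q : Ideal MoritaExample.R :=
  Ideal.span {2, MoritaExample.u}


namespace MoritaExample

private noncomputable def I0 : Ideal (Polynomial ℤ) := Ideal.span {(X : Polynomial ℤ) ^ 2 - 5 * X}

lemma mem_I0_iff (p : Polynomial ℤ) : p ∈ I0 ↔ p.eval 0 = 0 ∧ p.eval 5 = 0 := by
  rw [I0, Ideal.mem_span_singleton]
  constructor
  · rintro ⟨q, rfl⟩
    constructor <;> simp
  · rintro ⟨h0, h5⟩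
    have hX : (X : Polynomial ℤ) ∣ p := by
      simpa using dvd_iff_isRoot.mpr h0
    obtain ⟨q, rfl⟩ := hX
    have h5' : q.eval 5 = 0 := by
      simp only [eval_mul, eval_X] at h5
      omega
    obtain ⟨r, rfl⟩ := dvd_iff_isRoot.mpr h5'
    refine ⟨r, ?_⟩
    have h5C : (C (5:ℤ)) = (5 : Polynomial ℤ) := by norm_num
    rw [h5C]
    ring

noncomputable def mk0 : Polynomial ℤ →+* R := Ideal.Quotient.mk I0

lemma mk0_eq_zero (p : Polynomial ℤ) : mk0 p = 0 ↔ p.eval 0 = 0 ∧ p.eval 5 = 0 := by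
  rw [← mem_I0_iff]
  exact Ideal.Quotient.eq_zero_iff_mem

lemma mk0_X : mk0 X = u := rfl

lemma mk0_surj : Function.Surjective mk0 := Ideal.Quotient.mk_surjective

lemma hu : u * u = 5 * u := by
  have : mk0 (X * X - 5 * X) = 0 := by
    rw [mk0_eq_zero]; constructor <;> simp
  have h := this
  rw [map_sub, map_mul, map_mul, mk0_X, map_ofNat] at h
  linear_combination h
noncomputable def d : R := u - 4

lemma d_nzd (x : R) (hx : d * x = 0) : x = 0 := by
  obtain ⟨p, rfl⟩ := mk0_surj x
  have hd : d = mk0 (X - 4) := by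
    rw [map_sub, mk0_X, map_ofNat, d]
  rw [hd, ← map_mul, mk0_eq_zero] at hx
  simp only [eval_mul, eval_sub, eval_X, eval_ofNat] at hx
  rw [mk0_eq_zero]
  omega

lemma d_cancel {a b : R} (h : d * a = d * b) : a = b := by
  have h0 : d * (a - b) = 0 := by ring_nf; linear_combination h
  have := d_nzd _ h0
  linear_combination this

lemma two_mem : (2 : R) ∈ Q := Ideal.subset_span (by simp)

lemma u_mem : u ∈ Q := Ideal.subset_span (by simp)

lemma mul_mem_d {a b : R} (ha : a ∈ Q) (hb : b ∈ Q) : ∃ z : R, d * z = a * b := by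
  rw [Q, Ideal.mem_span_pair] at ha hb
  obtain ⟨m, n, rfl⟩ := ha
  obtain ⟨m', n', rfl⟩ := hb
  refine ⟨m * m' * (u - 1) + (m * n' + n * m') * (2 * u) + n * n' * (5 * u), ?_⟩
  rw [d]
  linear_combination (m * m' + 2 * (m * n' + n * m') + 4 * n * n') * hu

noncomputable def phi {y : R} (hy : y ∈ Q) : ↥Q →ₗ[R] R where
  toFun x := (mul_mem_d hy x.2).choose
  map_add' a b := by
    apply d_cancel
    rw [(mul_mem_d hy (a + b).2).choose_spec, mul_add,
      (mul_mem_d hy a.2).choose_spec, (mul_mem_d hy b.2).choose_spec,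
      Submodule.coe_add, mul_add]
  map_smul' r a := by
    apply d_cancel
    rw [RingHom.id_apply, (mul_mem_d hy (r • a).2).choose_spec]
    have := (mul_mem_d hy a.2).choose_spec
    rw [Submodule.coe_smul, smul_eq_mul, smul_eq_mul]
    linear_combination (-r) * this

lemma phi_spec {y : R} (hy : y ∈ Q) (x : ↥Q) : d * phi hy x = y * (x : R) :=
  (mul_mem_d hy x.2).choose_spec

lemma coe_mul_phi (φ : Module.Dual R ↥Q) (a b : ↥Q) : (a : R) * φ b = (b : R) * φ a := by
  have h : ((a : R) • b : ↥Q) = (b : R) • a := Subtype.ext (mul_comm _ _)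
  calc (a : R) * φ b = φ ((a : R) • b) := by rw [map_smul, smul_eq_mul]
    _ = φ ((b : R) • a) := by rw [h]
    _ = (b : R) * φ a := by rw [map_smul, smul_eq_mul]
lemma y2_mem : (-(2 * u + 2) : R) ∈ Q := by
  have h : (-(2 * u + 2) : R) = (-(u + 1)) * 2 := by ring
  rw [h]
  exact Q.mul_mem_left _ two_mem

lemma phi_swap {y : R} (hy : y ∈ Q) (φ : Module.Dual R ↥Q) (x : ↥Q) :
    φ x • phi hy = phi hy x • φ := by
  ext z
  simp only [LinearMap.smul_apply, smul_eq_mul]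
  apply d_cancel
  calc d * (φ x * phi hy z) = φ x * (d * phi hy z) := by ring
    _ = φ x * (y * (z : R)) := by rw [phi_spec]
    _ = y * ((z : R) * φ x) := by ring
    _ = y * ((x : R) * φ z) := by rw [coe_mul_phi]
    _ = (y * (x : R)) * φ z := by ring
    _ = (d * phi hy x) * φ z := by rw [phi_spec]
    _ = d * (phi hy x * φ z) := by ring

end MoritaExample

open scoped TensorProduct

/-- In the ring `R = ℤ[u]/(u² - 5u)`, the ideal `Q = (2, u)` is an invertible
`R`-module: the evaluation map `Hom_R(Q, R) ⊗[R] Q → R`, `φ ⊗ x ↦ φ(x)`, is an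
isomorphism. -/
theorem MoritaExample.Q_invertible :
    Function.Bijective (contractLeft MoritaExample.R MoritaExample.Q) := by
  classical
  set x1 : ↥Q := ⟨u, u_mem⟩ with hx1
  set x2 : ↥Q := ⟨2, two_mem⟩ with hx2
  set φ1 := phi u_mem with hφ1
  set φ2 := phi y2_mem with hφ2
  set T : Module.Dual R ↥Q ⊗[R] ↥Q := φ1 ⊗ₜ[R] x1 + φ2 ⊗ₜ[R] x2 with hT
  set g : R →ₗ[R] Module.Dual R ↥Q ⊗[R] ↥Q := LinearMap.toSpanSingleton R _ T with hg
  have hone : φ1 x1 + φ2 x2 = 1 := by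
    apply d_cancel
    rw [mul_add, phi_spec, phi_spec, mul_one, d]
    push_cast [hx1, hx2]
    linear_combination hu
  have hdual : ∀ x : ↥Q, φ1 x • x1 + φ2 x • x2 = x := by
    intro x
    apply Subtype.ext
    push_cast [hx1, hx2]
    simp only [smul_eq_mul]
    apply d_cancel
    have h1 := phi_spec u_mem x
    have h2 := phi_spec y2_mem x
    rw [← hφ1] at h1
    rw [← hφ2] at h2
    rw [d] at h1 h2 ⊢
    linear_combination u * h1 + 2 * h2 + (x : R) * hu
  have h1 : ∀ r : R, contractLeft R Q (g r) = r := by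
    intro r
    rw [hg, LinearMap.toSpanSingleton_apply, map_smul, hT, map_add,
      contractLeft_apply, contractLeft_apply, hone, smul_eq_mul, mul_one]
  have h2 : ∀ t, g (contractLeft R Q t) = t := by
    intro t
    induction t using TensorProduct.induction_on with
    | zero => simp
    | tmul φ x =>
      rw [contractLeft_apply, hg, LinearMap.toSpanSingleton_apply, hT, smul_add,
        TensorProduct.smul_tmul', TensorProduct.smul_tmul', hφ1, hφ2,
        phi_swap u_mem φ x, phi_swap y2_mem φ x,
        TensorProduct.smul_tmul, TensorProduct.smul_tmul, ← TensorProduct.tmul_add]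
      rw [← hφ1, ← hφ2, hdual x]
    | add s t hs ht =>
      rw [map_add, map_add, hs, ht]
  exact ⟨Function.LeftInverse.injective h2, Function.RightInverse.surjective h1⟩
end

section
/- A projective module P over a ring R is small (Hom_R(P,-) preserves arbitrary direct sums) if and only if P is finitely generated. -/
open DirectSum

/-- The canonical map `⨁ᵢ Hom_R(P, Nᵢ) →+ Hom_R(P, ⨁ᵢ Nᵢ)`. -/
noncomputable def homDirectSumComparison (R : Type u) [Ring R]
    (P : Type u) [AddCommGroup P] [Module R P]
    {ι : Type u} [DecidableEq ι] (N : ι → Type u)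
    [∀ i, AddCommGroup (N i)] [∀ i, Module R (N i)] :
    (⨁ i, (P →ₗ[R] N i)) →+ (P →ₗ[R] ⨁ i, N i) :=
  DirectSum.toAddMonoid fun i =>
    AddMonoidHom.mk' (fun f => (DirectSum.lof R ι N i).comp f)
      (fun f g => by ext x; simp)

lemma comparison_apply (R : Type u) [Ring R]
    (P : Type u) [AddCommGroup P] [Module R P]
    {ι : Type u} [DecidableEq ι] (N : ι → Type u)
    [∀ i, AddCommGroup (N i)] [∀ i, Module R (N i)]
    (g : ⨁ i, (P →ₗ[R] N i)) (x : P) (i : ι) :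
    homDirectSumComparison R P N g x i = g i x := by
  induction g using DirectSum.induction_on with
  | zero => simp
  | of j f =>
      rw [homDirectSumComparison, DirectSum.toAddMonoid_of]
      simp only [AddMonoidHom.mk'_apply, LinearMap.comp_apply]
      by_cases h : j = i
      · subst h
        simp [DirectSum.lof_apply, DirectSum.of_apply]
      · rw [DirectSum.of_eq_of_ne _ _ _ (Ne.symm h)]
        have : (DirectSum.lof R ι N j (f x)) i = 0 :=
          DirectSum.of_eq_of_ne _ _ _ (Ne.symm h)
        simp [this]
  | add a b ha hb =>
      simp [map_add, DirectSum.add_apply, ha, hb]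

/-- A projective module `P` over a ring `R` is small (the canonical map
`⨁ᵢ Hom_R(P, Nᵢ) → Hom_R(P, ⨁ᵢ Nᵢ)` is bijective for every family `N`) if and only
if `P` is finitely generated. -/
theorem projective_small_iff_finitelyGenerated (R : Type u) [Ring R]
    (P : Type u) [AddCommGroup P] [Module R P] [Module.Projective R P] :
    (∀ (ι : Type u) [DecidableEq ι] (N : ι → Type u)
      [∀ i, AddCommGroup (N i)] [∀ i, Module R (N i)],
        Function.Bijective (homDirectSumComparison R P N)) ↔ Module.Finite R P := by
  classical
  constructor
  · intro h
    obtain ⟨s, hs⟩ := Module.projective_def.mp (inferInstance : Module.Projective R P)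
    set s' : P →ₗ[R] ⨁ _ : P, R :=
      (finsuppLEquivDirectSum R R P).toLinearMap ∘ₗ s with hs'
    obtain ⟨g, hg⟩ := (h P (fun _ => R)).2 s'
    set S : Finset P := DFinsupp.support g with hS
    have hsupp : ∀ x : P, ∀ p : P, s x p ≠ 0 → p ∈ S := by
      intro x p hp
      have h1 : s' x p = s x p := by
        show ((s x).toDFinsupp) p = s x p
        rw [Finsupp.toDFinsupp_coe]
      have h2 : s' x p = g p x := by
        rw [← hg]; exact comparison_apply R P _ g x p
      by_contra hpS
      have : g p = 0 := by
        simpa [hS, DFinsupp.mem_support_iff] using hpS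
      rw [this] at h2
      exact hp (by rw [← h1, h2]; rfl)
    refine ⟨⟨S, ?_⟩⟩
    rw [eq_top_iff]
    intro x _
    have hx : x = Finsupp.linearCombination R (id : P → P) (s x) := (hs x).symm
    rw [hx, Finsupp.linearCombination_apply, Finsupp.sum]
    refine Submodule.sum_mem _ fun p hp => ?_
    exact Submodule.smul_mem _ _ (Submodule.subset_span
      (hsupp x p (Finsupp.mem_support_iff.mp hp)))
  · intro hfin ι _ N _ _
    constructor
    · intro a b hab
      refine DFinsupp.ext fun i => ?_
      refine LinearMap.ext fun x => ?_
      have ha := comparison_apply R P N a x i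
      have hb := comparison_apply R P N b x i
      rw [hab] at ha
      rw [← ha, hb]
    · intro f
      obtain ⟨s, hsp⟩ := hfin.fg_top
      set T : Finset ι := s.biUnion fun x => DFinsupp.support (f x) with hT
      have h0 : ∀ i, i ∉ T → ∀ x : P, f x i = 0 := by
        intro i hi x
        have hker : (⊤ : Submodule R P) ≤
            LinearMap.ker ((DirectSum.component R ι N i) ∘ₗ f) := by
          rw [← hsp]
          refine Submodule.span_le.mpr fun y hy => ?_
          simp only [SetLike.mem_coe, LinearMap.mem_ker, LinearMap.comp_apply]
          have : i ∉ DFinsupp.support (f y) := by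
            intro hmem
            exact hi (Finset.mem_biUnion.mpr ⟨y, hy, hmem⟩)
          exact (by simpa [DFinsupp.mem_support_iff, not_not] using this : f y i = 0)
        have := hker (Submodule.mem_top : x ∈ ⊤)
        exact (by simpa using this : DirectSum.component R ι N i (f x) = 0)
      refine ⟨DFinsupp.mk T fun i => (DirectSum.component R ι N i.1) ∘ₗ f, ?_⟩
      ext x
      rename_i i
      show homDirectSumComparison R P N _ x i = f x i
      rw [comparison_apply]
      by_cases hi : i ∈ T
      · simp [DFinsupp.mk_apply, hi]
        rfl
      · simp [DFinsupp.mk_apply, hi, h0 i hi x]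
end

section
/- Let T be a triangulated category with arbitrary coproducts and let M be a small object of T. Then M generates T (the smallest full triangulated subcategory containing M and closed under coproducts is all of T) if and only if M detects objects: an object X of T is zero if and only if T(M[n], X) = 0 for all integers n. -/
set_option maxHeartbeats 1000000

open CategoryTheory Limits Pretriangulated DirectSum

universe v u

variable {C : Type u} [Category.{v} C] [Preadditive C] [HasCoproducts.{v} C]

/-- The canonical comparison map `⊕ᵢ Hom(X, Yᵢ) →+ Hom(X, ∐ᵢ Yᵢ)`. -/
noncomputable def coproductComparison (X : C) {ι : Type v} [DecidableEq ι]
    (Y : ι → C) : (⨁ (i : ι), (X ⟶ Y i)) →+ (X ⟶ ∐ Y) :=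
  DirectSum.toAddMonoid fun i =>
    AddMonoidHom.mk' (fun f => f ≫ Sigma.ι Y i)
      (fun _ _ => Preadditive.add_comp _ _ _ _ _ _)

/-- An object `X` is *small* (compact) if the canonical map
`⊕ᵢ Hom(X, Yᵢ) → Hom(X, ∐ᵢ Yᵢ)` is bijective for every family `Y`. -/
def IsSmallObject (X : C) : Prop :=
  ∀ (ι : Type v) [DecidableEq ι] (Y : ι → C),
    Function.Bijective (coproductComparison X Y)

variable [HasZeroObject C] [HasShift C ℤ] [∀ n : ℤ, (shiftFunctor C n).Additive]
  [Pretriangulated C]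

/-- A class of objects of a triangulated category is *localizing* if it is closed
under isomorphisms, shifts, forming the third object of a distinguished triangle, and
arbitrary coproducts. -/
structure IsLocalizingClass (S : Set C) : Prop where
  iso_closed : ∀ {X Y : C}, (X ≅ Y) → X ∈ S → Y ∈ S
  shift_mem : ∀ (X : C) (n : ℤ), X ∈ S → X⟦n⟧ ∈ S
  triangle_closed : ∀ (T : Triangle C), T ∈ (distTriang C) →
    T.obj₁ ∈ S → T.obj₂ ∈ S → T.obj₃ ∈ S
  coproduct_mem : ∀ {ι : Type v} (Y : ι → C), (∀ i, Y i ∈ S) → (∐ Y) ∈ S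

section MyAux

@[simp] lemma coproductComparison_of (X : C) {ι : Type v} [DecidableEq ι]
    (Y : ι → C) (i : ι) (f : X ⟶ Y i) :
    coproductComparison X Y (DirectSum.of _ i f) = f ≫ Sigma.ι Y i := by
  simp [coproductComparison]

/-- postcomposition as an additive map -/
def postcompHom {X W W' : C} (g : W ⟶ W') : (X ⟶ W) →+ (X ⟶ W') :=
  AddMonoidHom.mk' (fun f => f ≫ g) (fun _ _ => Preadditive.add_comp _ _ _ _ _ _)

@[simp] lemma postcompHom_apply {X W W' : C} (g : W ⟶ W') (f : X ⟶ W) :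
    postcompHom g f = f ≫ g := rfl

lemma isSmallObject_shift {M : C} (hM : IsSmallObject M) (n : ℤ) :
    IsSmallObject (M⟦n⟧) := by
  intro ι _ Y
  let adj := (shiftEquiv C n).toAdjunction
  let G := shiftFunctor C (-n)
  let κ : (∐ fun i => G.obj (Y i)) ⟶ G.obj (∐ Y) := sigmaComparison G Y
  have hκ : IsIso κ := inferInstance
  let c : ∀ i : ι, (M⟦n⟧ ⟶ Y i) ≃+ (M ⟶ G.obj (Y i)) := fun i =>
    { adj.homEquiv M (Y i) with
      map_add' := fun f g => by
        haveI : (shiftEquiv C n).functor.Additive := (inferInstance : (shiftFunctor C n).Additive)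
        haveI : (shiftEquiv C n).inverse.Additive := (inferInstance : (shiftFunctor C (-n)).Additive)
        exact (adj.homAddEquiv M (Y i)).map_add f g }
  let E : (⨁ i, (M⟦n⟧ ⟶ Y i)) ≃+ ⨁ i, (M ⟶ G.obj (Y i)) :=
    DFinsupp.mapRange.addEquiv c
  let e : (M⟦n⟧ ⟶ ∐ Y) ≃+ (M ⟶ ∐ fun i => G.obj (Y i)) :=
    { toFun := fun f => adj.homEquiv M (∐ Y) f ≫ @inv _ _ _ _ κ hκ
      invFun := fun g => (adj.homEquiv M (∐ Y)).symm (g ≫ κ)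
      left_inv := fun f => by
        exact (congrArg (adj.homEquiv M (∐ Y)).symm ((Category.assoc _ _ _).trans
          ((congrArg (_ ≫ ·) (@IsIso.inv_hom_id _ _ _ _ κ hκ)).trans (Category.comp_id _)))).trans
          ((adj.homEquiv M (∐ Y)).symm_apply_apply f)
      right_inv := fun g => by
        exact (congrArg (· ≫ @inv _ _ _ _ κ hκ) ((adj.homEquiv M (∐ Y)).apply_symm_apply (g ≫ κ))).trans
          ((Category.assoc _ _ _).trans ((congrArg (g ≫ ·) (@IsIso.hom_inv_id _ _ _ _ κ hκ)).trans
          (Category.comp_id g)))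
      map_add' := fun f g => by
        haveI : (shiftEquiv C n).functor.Additive := (inferInstance : (shiftFunctor C n).Additive)
        haveI : (shiftEquiv C n).inverse.Additive := (inferInstance : (shiftFunctor C (-n)).Additive)
        exact (congrArg (· ≫ @inv _ _ _ _ κ hκ) ((adj.homAddEquiv M (∐ Y)).map_add f g)).trans
          (Preadditive.add_comp _ _ _ _ _ _) }
  have key : ∀ α, e (coproductComparison (M⟦n⟧) Y α)
      = coproductComparison M (fun i => G.obj (Y i)) (E α) := by
    intro α
    refine DFunLike.congr_fun (DirectSum.addHom_ext (f := e.toAddMonoidHom.comp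
      (coproductComparison (M⟦n⟧) Y))
      (g := (coproductComparison M (fun i => G.obj (Y i))).comp E.toAddMonoidHom)
      (fun i f => ?_)) α
    have hE : E (DirectSum.of _ i f) = DirectSum.of _ i (c i f) :=
      DFinsupp.mapRange_single (f := fun i => c i) (hf := fun i => (c i).map_zero)
    simp only [AddMonoidHom.coe_comp, Function.comp_apply, AddEquiv.coe_toAddMonoidHom,
      coproductComparison_of, hE]
    have he : e (f ≫ Sigma.ι Y i)
        = adj.homEquiv M (∐ Y) (f ≫ Sigma.ι Y i) ≫ @inv _ _ _ _ κ hκ := rfl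
    rw [he]
    erw [Adjunction.homEquiv_naturality_right]
    have : (shiftEquiv C n).inverse.map (Sigma.ι Y i)
        = Sigma.ι (fun i => G.obj (Y i)) i ≫ κ :=
      (ι_comp_sigmaComparison G Y i).symm
    rw [this]
    exact (Category.assoc _ _ _).trans (congrArg (_ ≫ ·) ((Category.assoc _ _ _).trans
      ((congrArg (_ ≫ ·) (@IsIso.hom_inv_id _ _ _ _ κ hκ)).trans (Category.comp_id _))))
  have : ⇑(coproductComparison (M⟦n⟧) Y)
      = ⇑e.symm ∘ ⇑(coproductComparison M (fun i => G.obj (Y i))) ∘ ⇑E := by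
    funext α
    simp [← key]
  rw [this]
  exact e.symm.bijective.comp ((hM ι (fun i => G.obj (Y i))).comp E.bijective)


/-- Vanishing of a hom group is preserved under shifting both arguments by `1`. -/
lemma vanish_shift_one {B W : C} (hBW : ∀ f : B ⟶ W, f = 0)
    (k : B⟦(1:ℤ)⟧ ⟶ W⟦(1:ℤ)⟧) : k = 0 := by
  obtain ⟨k', hk'⟩ := (shiftFunctor C (1:ℤ)).map_surjective k
  rw [← hk', hBW k', Functor.map_zero]


end MyAux

/-- A small object `M` of a triangulated category with coproducts generates it (the
smallest localizing class containing `M` is everything) if and only if `M` detects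
objects: `X` is zero iff there are no nonzero maps `M⟦n⟧ ⟶ X` for any `n ∈ ℤ`. -/
theorem small_generator_iff_detects_objects (M : C) (hM : IsSmallObject M) :
    (∀ S : Set C, IsLocalizingClass S → M ∈ S → ∀ X : C, X ∈ S) ↔
    (∀ X : C, IsZero X ↔ ∀ (n : ℤ) (f : M⟦n⟧ ⟶ X), f = 0) := by
  constructor
  · -- generation implies detection
    intro hgen X
    constructor
    · intro hX n f
      exact hX.eq_of_tgt f 0
    · intro hX
      set S : Set C := {Y | ∀ (n : ℤ) (g : Y ⟶ X⟦n⟧), g = 0} with hSdef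
      have hS : IsLocalizingClass S := by
        constructor
        · intro Y₁ Y₂ e h n g
          have h1 : e.hom ≫ g = 0 := h n (e.hom ≫ g)
          calc g = e.inv ≫ (e.hom ≫ g) := by simp
          _ = 0 := by rw [h1, Limits.comp_zero]
        · intro Y m hY n g
          let adj := (shiftEquiv' C m (-m) (add_neg_cancel m)).toAdjunction
          have hg' : ∀ f : Y ⟶ (X⟦n⟧)⟦-m⟧, f = 0 := by
            intro f
            have : f ≫ ((shiftFunctorAdd' C n (-m) (n + -m) rfl).app X).inv = 0 :=
              hY _ _
            calc f = (f ≫ ((shiftFunctorAdd' C n (-m) (n + -m) rfl).app X).inv) ≫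
                      ((shiftFunctorAdd' C n (-m) (n + -m) rfl).app X).hom := by simp
            _ = 0 := by rw [this, Limits.zero_comp]
          have hg0 : adj.homEquiv Y (X⟦n⟧) g = 0 := hg' _
          have : g = (adj.homEquiv Y (X⟦n⟧)).symm (adj.homEquiv Y (X⟦n⟧) g) :=
            ((adj.homEquiv Y (X⟦n⟧)).symm_apply_apply g).symm
          rw [this, hg0]
          simp [adj, Adjunction.homEquiv_symm_apply]
          rfl
        · intro T hT h₁ h₂ n g
          obtain ⟨k, hk⟩ := Triangle.yoneda_exact₃ T hT g (h₂ n _)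
          have hk0 : k = 0 := by
            have hiso := (shiftFunctorAdd' C (n-1) (1:ℤ) n (by ring)).app X
            have h1 : ∀ f : T.obj₁ ⟶ X⟦n-1⟧, f = 0 := h₁ (n-1)
            have : k ≫ hiso.hom = 0 := vanish_shift_one h1 (k ≫ hiso.hom)
            calc k = (k ≫ hiso.hom) ≫ hiso.inv := by simp
            _ = 0 := by rw [this, Limits.zero_comp]
          rw [hk, hk0, Limits.comp_zero]
        · intro ι Y hY n g
          apply colimit.hom_ext
          intro j
          rw [Limits.comp_zero]
          exact hY j.as n _
      have hMS : M ∈ S := by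
        intro n g
        let adj := (shiftEquiv' C (-n) n (neg_add_cancel n)).toAdjunction
        have h0 : (adj.homEquiv M X).symm g = 0 := hX (-n) _
        have : g = adj.homEquiv M X ((adj.homEquiv M X).symm g) :=
          ((adj.homEquiv M X).apply_symm_apply g).symm
        rw [this, h0]
        simp [adj, Adjunction.homEquiv_apply]
        rfl
      have hXS := hgen S hS hMS X
      have hId : ((shiftFunctorZero C ℤ).app X).inv = 0 := hXS 0 _
      rw [IsZero.iff_id_eq_zero]
      calc 𝟙 X = ((shiftFunctorZero C ℤ).app X).inv ≫
            ((shiftFunctorZero C ℤ).app X).hom := by simp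
      _ = 0 := by rw [hId, Limits.zero_comp]
  · -- detection implies generation
    intro hdet S hS hMS X
    -- Step construction: kill relations against `X`
    have step : ∀ (V : C), V ∈ S → ∀ (pV : V ⟶ X), ∃ (V' : C) (uV : V ⟶ V') (pV' : V' ⟶ X),
        V' ∈ S ∧ uV ≫ pV' = pV ∧
        ∀ (n : ℤ) (g : M⟦n⟧ ⟶ V), g ≫ pV = 0 → g ≫ uV = 0 := by
      intro V hV pV
      let κW := (n : ℤ) × {g : M⟦n⟧ ⟶ V // g ≫ pV = 0}
      let WW := ∐ (fun j : κW => M⟦j.1⟧)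
      let w : WW ⟶ V := Sigma.desc fun j => j.2.1
      obtain ⟨V', uV, d, hT⟩ := distinguished_cocone_triangle w
      have hWW : WW ∈ S := hS.coproduct_mem _ fun j => hS.shift_mem M j.1 hMS
      have hwp : w ≫ pV = 0 := by
        apply Limits.Sigma.hom_ext
        intro j
        rw [← Category.assoc, Limits.comp_zero]
        have : Sigma.ι (fun j : κW => M⟦j.1⟧) j ≫ w = j.2.1 := by simp [w]
        rw [this, j.2.2]
      obtain ⟨pV', hpV'⟩ := Triangle.yoneda_exact₂ _ hT pV (by exact hwp)
      replace hpV' : pV = uV ≫ pV' := hpV'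
      refine ⟨V', uV, pV', hS.triangle_closed _ hT hWW hV, hpV'.symm, ?_⟩
      intro n g hg
      have hgw : g = Sigma.ι (fun j : κW => M⟦j.1⟧) ⟨n, g, hg⟩ ≫ w := by simp [w]
      rw [hgw, Category.assoc]
      have hz : w ≫ uV = 0 := comp_distTriang_mor_zero₁₂ _ hT
      rw [hz, Limits.comp_zero]
    choose Vf uf pf hmemf hfacf hkillf using step
    -- The tower
    let U0 : C := ∐ (fun j : (n : ℤ) × (M⟦n⟧ ⟶ X) => M⟦j.1⟧)
    have hU0 : U0 ∈ S := hS.coproduct_mem _ fun j => hS.shift_mem M j.1 hMS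
    let p0 : U0 ⟶ X := Sigma.desc fun j => j.2
    let F : ℕ → Σ' (V : C) (_ : V ∈ S), V ⟶ X :=
      fun k => Nat.rec ⟨U0, hU0, p0⟩
        (fun _ s => ⟨Vf s.1 s.2.1 s.2.2, hmemf s.1 s.2.1 s.2.2, pf s.1 s.2.1 s.2.2⟩) k
    let U : ℕ → C := fun k => (F k).1
    have hUmem : ∀ k, U k ∈ S := fun k => (F k).2.1
    let p : ∀ k, U k ⟶ X := fun k => (F k).2.2
    let u : ∀ k, U k ⟶ U (k + 1) := fun k => uf (F k).1 (F k).2.1 (F k).2.2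
    have hcomm : ∀ k, u k ≫ p (k + 1) = p k := fun k => hfacf (F k).1 (F k).2.1 (F k).2.2
    have hkill : ∀ k (n : ℤ) (g : M⟦n⟧ ⟶ U k), g ≫ p k = 0 → g ≫ u k = 0 :=
      fun k => hkillf (F k).1 (F k).2.1 (F k).2.2
    have hsurj0 : ∀ (n : ℤ) (g : M⟦n⟧ ⟶ X), ∃ g0 : M⟦n⟧ ⟶ U 0, g0 ≫ p 0 = g := by
      intro n g
      refine ⟨Sigma.ι (fun j : (n : ℤ) × (M⟦n⟧ ⟶ X) => M⟦j.1⟧) ⟨n, g⟩, ?_⟩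
      show Sigma.ι (fun j : (n : ℤ) × (M⟦n⟧ ⟶ X) => M⟦j.1⟧) ⟨n, g⟩ ≫ p0 = g
      simp [p0]
    clear_value u p U F
    -- The homotopy colimit
    haveI : DecidableEq (ULift.{v} ℕ) := fun a b =>
      decidable_of_iff (a.down = b.down)
        ⟨fun h => by cases a; cases b; cases h; rfl, fun h => h ▸ rfl⟩
    let fam : ULift.{v} ℕ → C := fun i => U i.down
    let A : C := ∐ fam
    have hA : A ∈ S := hS.coproduct_mem _ fun i => hUmem i.down
    let ja : ∀ i : ℕ, U i ⟶ A := fun i => Sigma.ι fam ⟨i⟩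
    let s : A ⟶ A := Sigma.desc fun i => ja i.down - u i.down ≫ ja (i.down + 1)
    obtain ⟨Y, σ, δ, hTY⟩ := distinguished_cocone_triangle s
    have hY : Y ∈ S := hS.triangle_closed _ hTY hA hA
    let dp : A ⟶ X := Sigma.desc fun i => p i.down
    have hjadp : ∀ i : ℕ, ja i ≫ dp = p i := fun i => by simp [ja, dp]
    have hjas : ∀ i : ℕ, ja i ≫ s = ja i - u i ≫ ja (i + 1) := fun i => by simp [ja, s]
    have hsdp : s ≫ dp = 0 := by
      apply Limits.Sigma.hom_ext
      intro i
      rw [← Category.assoc, Limits.comp_zero]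
      have h1 : Sigma.ι fam i ≫ s = ja i.down ≫ s := rfl
      rw [h1, hjas, Preadditive.sub_comp, hjadp, Category.assoc, hjadp, hcomm, sub_self]
    obtain ⟨q, hq⟩ : ∃ q : Y ⟶ X, dp = σ ≫ q := Triangle.yoneda_exact₂ _ hTY dp (by exact hsdp)
    replace hq : dp = σ ≫ q := hq
    have hqsurj : ∀ (n : ℤ) (g : M⟦n⟧ ⟶ X), ∃ g', g' ≫ q = g := by
      intro n g
      obtain ⟨g0, hg0⟩ := hsurj0 n g
      refine ⟨g0 ≫ ja 0 ≫ σ, ?_⟩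
      rw [Category.assoc, Category.assoc, ← hq, hjadp, hg0]
    have hss : s ≫ σ = 0 := comp_distTriang_mor_zero₁₂ _ hTY
    have hjaσ : ∀ i : ℕ, ja i ≫ σ = u i ≫ ja (i + 1) ≫ σ := by
      intro i
      have h1 : (ja i - u i ≫ ja (i + 1)) ≫ σ = 0 := by
        rw [← hjas, Category.assoc, hss, Limits.comp_zero]
      rw [Preadditive.sub_comp] at h1
      have := sub_eq_zero.mp h1
      rw [this, Category.assoc]
    -- pushing along the tower
    have hpush : ∀ (n : ℤ) (N N' : ℕ), N ≤ N' → ∀ (β : M⟦n⟧ ⟶ U N), ∃ γ : M⟦n⟧ ⟶ U N',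
        β ≫ ja N ≫ σ = γ ≫ ja N' ≫ σ ∧ γ ≫ p N' = β ≫ p N := by
      intro n N N' h
      induction N', h using Nat.le_induction with
      | base => exact fun β => ⟨β, rfl, rfl⟩
      | succ N' hNN' ih =>
        intro β
        obtain ⟨γ, h1, h2⟩ := ih β
        refine ⟨γ ≫ u N', ?_, ?_⟩
        · rw [h1, hjaσ N', Category.assoc]
        · rw [Category.assoc, hcomm, h2]
    have hMsh : ∀ n : ℤ, IsSmallObject (M⟦n⟧) := fun n => isSmallObject_shift hM n
    -- decomposition of maps into the coproduct
    have hdecomp : ∀ (n : ℤ) (a : M⟦n⟧ ⟶ A), ∃ (N : ℕ) (β : M⟦n⟧ ⟶ U N),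
        a ≫ σ = β ≫ ja N ≫ σ ∧ β ≫ p N = a ≫ dp := by
      intro n a
      obtain ⟨α, rfl⟩ := (hMsh n (ULift.{v} ℕ) fam).surjective a
      induction α using DirectSum.induction_on with
      | zero => exact ⟨0, 0, by simp, by simp⟩
      | of i g =>
        obtain ⟨i⟩ := i
        refine ⟨i, g, ?_, ?_⟩
        · rw [coproductComparison_of, Category.assoc]
        · rw [coproductComparison_of, Category.assoc]
          have : Sigma.ι fam ⟨i⟩ ≫ dp = p i := hjadp i
          rw [this]
      | add x y hx hy =>
        obtain ⟨N₁, β₁, e₁, f₁⟩ := hx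
        obtain ⟨N₂, β₂, e₂, f₂⟩ := hy
        obtain ⟨γ₁, g₁, g₁'⟩ := hpush n N₁ (max N₁ N₂) (le_max_left _ _) β₁
        obtain ⟨γ₂, g₂, g₂'⟩ := hpush n N₂ (max N₁ N₂) (le_max_right _ _) β₂
        refine ⟨max N₁ N₂, γ₁ + γ₂, ?_, ?_⟩
        · rw [map_add, Preadditive.add_comp, e₁, e₂, g₁, g₂, Preadditive.add_comp]
        · rw [Preadditive.add_comp, g₁', g₂', f₁, f₂, map_add, Preadditive.add_comp]
    -- injectivity of composition with s
    have hsinj : ∀ (n : ℤ) (k : M⟦n⟧ ⟶ A), k ≫ s = 0 → k = 0 := by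
      intro n k hk
      obtain ⟨α, rfl⟩ := (hMsh n (ULift.{v} ℕ) fam).surjective k
      let sM : (⨁ i : ULift.{v} ℕ, (M⟦n⟧ ⟶ fam i)) →+ (⨁ i : ULift.{v} ℕ, (M⟦n⟧ ⟶ fam i)) :=
        DirectSum.toAddMonoid fun i =>
          (DirectSum.of (fun j : ULift.{v} ℕ => (M⟦n⟧ ⟶ fam j)) i) -
          ((DirectSum.of (fun j : ULift.{v} ℕ => (M⟦n⟧ ⟶ fam j)) ⟨i.down + 1⟩).comp
            (postcompHom (u i.down)))
      have hsMof : ∀ (i : ULift.{v} ℕ) (g : M⟦n⟧ ⟶ fam i),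
          sM (DirectSum.of _ i g) = DirectSum.of (fun j : ULift.{v} ℕ => (M⟦n⟧ ⟶ fam j)) i g
            - DirectSum.of (fun j : ULift.{v} ℕ => (M⟦n⟧ ⟶ fam j)) ⟨i.down + 1⟩
              (g ≫ u i.down) := by
        intro i g
        rw [show sM = DirectSum.toAddMonoid _ from rfl, DirectSum.toAddMonoid_of,
          AddMonoidHom.sub_apply, AddMonoidHom.comp_apply]
        rfl
      have hsM : ∀ α', coproductComparison (M⟦n⟧) fam (sM α')
          = coproductComparison (M⟦n⟧) fam α' ≫ s := by
        intro α'
        refine DFunLike.congr_fun (DirectSum.addHom_ext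
          (f := (coproductComparison (M⟦n⟧) fam).comp sM)
          (g := (postcompHom s).comp (coproductComparison (M⟦n⟧) fam)) fun i g => ?_) α'
        obtain ⟨i⟩ := i
        simp only [AddMonoidHom.coe_comp, Function.comp_apply, postcompHom_apply,
          coproductComparison_of]
        have h2 : Sigma.ι fam (⟨i⟩ : ULift.{v} ℕ) ≫ s = ja i - u i ≫ ja (i + 1) := hjas i
        rw [hsMof ⟨i⟩ g, map_sub, coproductComparison_of, coproductComparison_of,
          Category.assoc g (Sigma.ι fam ⟨i⟩) s, h2, Preadditive.comp_sub, ← Category.assoc]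
      have h0 : sM α = 0 := by
        apply (hMsh n (ULift.{v} ℕ) fam).injective
        rw [hsM, hk, map_zero]
      -- evaluations
      have hofeq : ∀ (a : ℕ) (g : M⟦n⟧ ⟶ fam ⟨a⟩),
          (DirectSum.of (fun j : ULift.{v} ℕ => (M⟦n⟧ ⟶ fam j)) ⟨a⟩ g) (⟨a⟩ : ULift.{v} ℕ)
            = g := fun a g => DirectSum.of_eq_same _ _
      have hofne : ∀ (a b : ℕ), a ≠ b → ∀ (g : M⟦n⟧ ⟶ fam ⟨a⟩),
          (DirectSum.of (fun j : ULift.{v} ℕ => (M⟦n⟧ ⟶ fam j)) ⟨a⟩ g) (⟨b⟩ : ULift.{v} ℕ)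
            = 0 := fun a b hab g =>
        DirectSum.of_eq_of_ne _ _ _ (fun e => hab (congrArg ULift.down e).symm)
      have hev0 : sM α ⟨0⟩ = α ⟨0⟩ := by
        refine DFunLike.congr_fun (DirectSum.addHom_ext
          (f := (DFinsupp.evalAddMonoidHom (β := fun i : ULift.{v} ℕ => (M⟦n⟧ ⟶ fam i)) (⟨0⟩ : ULift.{v} ℕ)).comp sM)
          (g := DFinsupp.evalAddMonoidHom (β := fun i : ULift.{v} ℕ => (M⟦n⟧ ⟶ fam i)) (⟨0⟩ : ULift.{v} ℕ)) fun i g => ?_) α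
        obtain ⟨i⟩ := i
        simp only [AddMonoidHom.coe_comp, Function.comp_apply]
        erw [hsMof ⟨i⟩ g]
        show (DirectSum.of (fun j : ULift.{v} ℕ => (M⟦n⟧ ⟶ fam j)) (⟨i⟩ : ULift.{v} ℕ) g
          - DirectSum.of (fun j : ULift.{v} ℕ => (M⟦n⟧ ⟶ fam j)) (⟨i + 1⟩ : ULift.{v} ℕ) (g ≫ u i)) (⟨0⟩ : ULift.{v} ℕ)
          = (DirectSum.of (fun j : ULift.{v} ℕ => (M⟦n⟧ ⟶ fam j)) (⟨i⟩ : ULift.{v} ℕ) g)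
            (⟨0⟩ : ULift.{v} ℕ)
        rw [DFinsupp.sub_apply, hofne (i + 1) 0 (Nat.succ_ne_zero i), sub_zero]
      have hevsucc : ∀ j : ℕ, sM α ⟨j + 1⟩ = α ⟨j + 1⟩ - (α ⟨j⟩) ≫ u j := by
        intro j
        refine DFunLike.congr_fun (DirectSum.addHom_ext
          (f := (DFinsupp.evalAddMonoidHom (β := fun i : ULift.{v} ℕ => (M⟦n⟧ ⟶ fam i)) (⟨j + 1⟩ : ULift.{v} ℕ)).comp sM)
          (g := (DFinsupp.evalAddMonoidHom (β := fun i : ULift.{v} ℕ => (M⟦n⟧ ⟶ fam i)) (⟨j + 1⟩ : ULift.{v} ℕ)) -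
            (postcompHom (u j)).comp (DFinsupp.evalAddMonoidHom (β := fun i : ULift.{v} ℕ => (M⟦n⟧ ⟶ fam i)) (⟨j⟩ : ULift.{v} ℕ)))
          fun i g => ?_) α
        obtain ⟨i⟩ := i
        simp only [AddMonoidHom.coe_comp, Function.comp_apply, AddMonoidHom.sub_apply,
          postcompHom_apply]
        erw [hsMof ⟨i⟩ g]
        show (DirectSum.of (fun j : ULift.{v} ℕ => (M⟦n⟧ ⟶ fam j)) (⟨i⟩ : ULift.{v} ℕ) g
            - DirectSum.of (fun j : ULift.{v} ℕ => (M⟦n⟧ ⟶ fam j)) (⟨i + 1⟩ : ULift.{v} ℕ) (g ≫ u i)) (⟨j + 1⟩ : ULift.{v} ℕ)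
          = (DirectSum.of (fun j : ULift.{v} ℕ => (M⟦n⟧ ⟶ fam j)) (⟨i⟩ : ULift.{v} ℕ) g)
              (⟨j + 1⟩ : ULift.{v} ℕ)
            - ((DirectSum.of (fun j : ULift.{v} ℕ => (M⟦n⟧ ⟶ fam j)) (⟨i⟩ : ULift.{v} ℕ) g)
              (⟨j⟩ : ULift.{v} ℕ)) ≫ u j
        rw [DFinsupp.sub_apply]
        by_cases hij : i = j
        · subst hij
          rw [hofne i (i + 1) (Nat.succ_ne_self i).symm, hofeq (i + 1), hofeq i]
        · by_cases hij1 : i = j + 1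
          · subst hij1
            rw [hofeq (j + 1), hofne (j + 1 + 1) (j + 1) (Nat.succ_ne_self (j + 1)),
              hofne (j + 1) j (Nat.succ_ne_self j)]
            simp
          · rw [hofne i (j + 1) hij1, hofne (i + 1) (j + 1)
                (fun e => hij (Nat.succ_injective e)), hofne i j hij]
            simp
      -- conclude α = 0
      have hzero : ∀ j : ℕ, α ⟨j⟩ = 0 := by
        intro j
        induction j with
        | zero =>
          have := hev0
          rw [h0] at this
          simpa using this.symm
        | succ j ih =>
          have := hevsucc j
          rw [h0, ih, Limits.zero_comp, sub_zero] at this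
          simpa using this.symm
      have hα : α = 0 := DFinsupp.ext fun i => by
        obtain ⟨i⟩ := i; exact hzero i
      rw [hα, map_zero]
    -- the shift trick
    have hshift1 : ∀ {B B' : C} (t : B ⟶ B'),
        (∀ (m : ℤ) (k : M⟦m⟧ ⟶ B), k ≫ t = 0 → k = 0) →
        ∀ (n : ℤ) (v : M⟦n⟧ ⟶ B⟦(1:ℤ)⟧), v ≫ t⟦(1:ℤ)⟧' = 0 → v = 0 := by
      intro B B' t ht n v hv
      have ψ := (shiftFunctorAdd' C (n - 1) (1:ℤ) n (by ring)).app M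
      obtain ⟨k, hk⟩ := (shiftFunctor C (1:ℤ)).map_surjective (ψ.inv ≫ v)
      have hkt : k ≫ t = 0 := by
        apply (shiftFunctor C (1:ℤ)).map_injective
        rw [Functor.map_comp, hk, Category.assoc, hv, Limits.comp_zero, Functor.map_zero]
      have hk0 : k = 0 := ht (n - 1) k hkt
      have h2 : ψ.inv ≫ v = 0 := by rw [← hk, hk0, Functor.map_zero]
      calc v = ψ.hom ≫ (ψ.inv ≫ v) := by simp
      _ = 0 := by rw [h2, Limits.comp_zero]
    -- injectivity of composition with q
    have hqinj : ∀ (n : ℤ) (h : M⟦n⟧ ⟶ Y), h ≫ q = 0 → h = 0 := by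
      intro n h hh
      have hδ0 : h ≫ δ = 0 := by
        apply hshift1 s hsinj n (h ≫ δ)
        rw [Category.assoc]
        have : δ ≫ s⟦(1:ℤ)⟧' = 0 := comp_distTriang_mor_zero₃₁ _ hTY
        rw [this, Limits.comp_zero]
      obtain ⟨a, ha⟩ : ∃ a : M⟦n⟧ ⟶ A, h = a ≫ σ := Triangle.coyoneda_exact₃ _ hTY h hδ0
      replace ha : h = a ≫ σ := ha
      obtain ⟨N, β, hβ1, hβ2⟩ := hdecomp n a
      have hβp : β ≫ p N = 0 := by
        rw [hβ2, hq, ← Category.assoc, ← ha, hh]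
      have hβu : β ≫ u N = 0 := hkill N n β hβp
      rw [ha, hβ1, hjaσ N, ← Category.assoc, hβu, Limits.zero_comp]
    -- the cone of q is zero
    obtain ⟨Z, r, w', hTZ⟩ := distinguished_cocone_triangle q
    have hZ : IsZero Z := by
      rw [hdet Z]
      intro n g
      have hgw : g ≫ w' = 0 := by
        apply hshift1 q hqinj n (g ≫ w')
        rw [Category.assoc]
        have : w' ≫ q⟦(1:ℤ)⟧' = 0 := comp_distTriang_mor_zero₃₁ _ hTZ
        rw [this, Limits.comp_zero]
      obtain ⟨g', hg'⟩ : ∃ g' : M⟦n⟧ ⟶ X, g = g' ≫ r := Triangle.coyoneda_exact₃ _ hTZ g hgw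
      replace hg' : g = g' ≫ r := hg'
      obtain ⟨h', hh'⟩ := hqsurj n g'
      have : q ≫ r = 0 := comp_distTriang_mor_zero₁₂ _ hTZ
      rw [hg', ← hh', Category.assoc, this, Limits.comp_zero]
    haveI hiso : IsIso q := (Triangle.isZero₃_iff_isIso₁ _ hTZ).1 hZ
    exact hS.iso_closed (asIso q) hY
end

section
/- Let F : S → T be an exact functor between triangulated categories with arbitrary coproducts that preserves coproducts. Suppose S has a small generator P such that F(P) is a small generator of T and F induces bijections S(P[n], P) → T(F(P)[n], F(P)) for all integers n. Then F is an equivalence of categories. -/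
open CategoryTheory Limits Pretriangulated DirectSum

universe v u u'

section

variable {C : Type u} [Category.{v} C] [Preadditive C] [HasCoproducts.{v} C]

variable [HasZeroObject C] [HasShift C ℤ] [∀ n : ℤ, (shiftFunctor C n).Additive]
  [Pretriangulated C]

/-- An object `M` generates a triangulated category if the only localizing class of
objects containing `M` is the class of all objects. -/
def IsGenerator (M : C) : Prop :=
  ∀ S : Set C, IsLocalizingClass S → M ∈ S → ∀ X : C, X ∈ S

end

namespace SmallGenAux

variable {C : Type u} [Category.{v} C] {D : Type u'} [Category.{v} D]

/-- `F` induces a bijection on `Hom(X, Y)`. -/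
def Good (F : C ⥤ D) (X Y : C) : Prop :=
  Function.Bijective (fun f : X ⟶ Y => F.map f)

lemma conj_bij {W X Y Z : C} (e : W ≅ X) (e' : Y ≅ Z) :
    Function.Bijective (fun f : X ⟶ Y => e.hom ≫ f ≫ e'.hom) := by
  constructor
  · intro a b h
    have h1 := (cancel_epi e.hom).1 h
    simpa using (cancel_mono e'.hom).1 (by simpa using h1)
  · intro u
    exact ⟨e.inv ≫ u ≫ e'.inv, by simp⟩

lemma precomp_bij {W X Y : C} (e : W ≅ X) :
    Function.Bijective (fun f : X ⟶ Y => e.hom ≫ f) := by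
  constructor
  · intro a b h
    exact (cancel_epi e.hom).1 h
  · intro u
    exact ⟨e.inv ≫ u, by simp⟩

lemma postcomp_bij {X Y Z : C} (e : Y ≅ Z) :
    Function.Bijective (fun f : X ⟶ Y => f ≫ e.hom) := by
  constructor
  · intro a b h
    exact (cancel_mono e.hom).1 h
  · intro u
    exact ⟨u ≫ e.inv, by simp⟩

lemma Good.of_iso {F : C ⥤ D} {X X' Y Y' : C} (e₁ : X ≅ X') (e₂ : Y ≅ Y')
    (h : Good F X Y) : Good F X' Y' := by
  have key : (fun f : X' ⟶ Y' => F.map f) =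
      (fun u : F.obj X ⟶ F.obj Y => (F.mapIso e₁).symm.hom ≫ u ≫ (F.mapIso e₂).hom) ∘
        (fun f : X ⟶ Y => F.map f) ∘ (fun f : X' ⟶ Y' => e₁.hom ≫ f ≫ e₂.symm.hom) := by
    funext f
    simp only [Iso.symm_hom, Functor.mapIso_hom, Functor.mapIso_inv, ← Functor.map_comp]
    simp
  rw [Good, key]
  exact (conj_bij _ _).comp (h.comp (conj_bij _ _))

section Shift

variable [HasShift C ℤ] [HasShift D ℤ]

lemma Good.shift {F : C ⥤ D} [F.CommShift ℤ] {X Y : C} (h : Good F X Y) (n : ℤ) :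
    Good F (X⟦n⟧) (Y⟦n⟧) := by
  have hs : Function.Bijective (fun f : X ⟶ Y => f⟦n⟧') :=
    ⟨fun _ _ hh => (shiftFunctor C n).map_injective hh,
     fun g => (shiftFunctor C n).map_surjective g⟩
  have key : (fun g : X⟦n⟧ ⟶ Y⟦n⟧ => F.map g) ∘ (fun f : X ⟶ Y => f⟦n⟧')
      = (fun u : (F.obj X)⟦n⟧ ⟶ (F.obj Y)⟦n⟧ =>
          ((F.commShiftIso n).app X).symm.symm.hom ≫ u ≫ ((F.commShiftIso n).app Y).symm.hom) ∘
        (fun u : F.obj X ⟶ F.obj Y => u⟦n⟧') ∘ (fun f : X ⟶ Y => F.map f) := by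
    funext f
    dsimp
    rw [← cancel_mono ((F.commShiftIso n).hom.app Y)]
    simp
  have hbij : Function.Bijective ((fun g : X⟦n⟧ ⟶ Y⟦n⟧ => F.map g) ∘
      (fun f : X ⟶ Y => f⟦n⟧')) := by
    rw [key]
    refine (conj_bij _ _).comp (Function.Bijective.comp ?_ h)
    exact ⟨fun _ _ hh => (shiftFunctor D n).map_injective hh,
      fun g => (shiftFunctor D n).map_surjective g⟩
  exact (Function.Bijective.of_comp_iff _ hs).mp hbij

end Shift

section Coproducts

variable {C : Type u} [Category.{v} C] [Preadditive C] [HasCoproducts.{v} C]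
  {D : Type u'} [Category.{v} D] [Preadditive D] [HasCoproducts.{v} D]
  (F : C ⥤ D) [F.Additive]

lemma coproductComparison_of (X : C) {ι : Type v} [DecidableEq ι] (Y : ι → C)
    (i : ι) (f : X ⟶ Y i) :
    coproductComparison X Y (DirectSum.of _ i f) = f ≫ Sigma.ι Y i := by
  rw [coproductComparison, DirectSum.toAddMonoid_of]
  rfl

/-- Componentwise application of `F.map` on direct sums of hom groups. -/
noncomputable def mapDS (X : C) {ι : Type v} [DecidableEq ι] (Y : ι → C) :
    (⨁ (i : ι), (X ⟶ Y i)) →+ (⨁ (i : ι), (F.obj X ⟶ F.obj (Y i))) :=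
  DirectSum.toAddMonoid fun i =>
    (DirectSum.of (fun i => (F.obj X ⟶ F.obj (Y i))) i).comp F.mapAddHom

lemma mapDS_apply (X : C) {ι : Type v} [DecidableEq ι] (Y : ι → C)
    (a : ⨁ (i : ι), (X ⟶ Y i)) (j : ι) :
    mapDS F X Y a j = F.map (a j) := by
  induction a using DirectSum.induction_on with
  | zero => simp
  | of i x =>
    rw [mapDS, DirectSum.toAddMonoid_of, AddMonoidHom.comp_apply]
    rcases eq_or_ne i j with rfl | hij
    · rw [DirectSum.of_eq_same, DirectSum.of_eq_same]
      rfl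
    · rw [DirectSum.of_eq_of_ne _ _ _ hij.symm, DirectSum.of_eq_of_ne _ _ _ hij.symm]
      simp
  | add a b ha hb =>
    rw [map_add, DirectSum.add_apply, DirectSum.add_apply, ha, hb, F.map_add]

lemma comparison_natural (X : C) {ι : Type v} [DecidableEq ι] (Y : ι → C)
    (a : ⨁ (i : ι), (X ⟶ Y i)) :
    F.map (coproductComparison X Y a)
      = coproductComparison (F.obj X) (fun i => F.obj (Y i)) (mapDS F X Y a)
          ≫ sigmaComparison F Y := by
  induction a using DirectSum.induction_on with
  | zero => simp
  | of i x =>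
    rw [coproductComparison_of, mapDS, DirectSum.toAddMonoid_of, AddMonoidHom.comp_apply]
    have : (F.mapAddHom : (X ⟶ Y i) →+ _) x = F.map x := rfl
    rw [this, coproductComparison_of, F.map_comp, Category.assoc, ι_comp_sigmaComparison,
      ← F.map_comp]
  | add a b ha hb =>
    rw [map_add, map_add, map_add, F.map_add, Preadditive.add_comp, ha, hb]

open SmallGenAux in
lemma good_sigma_of_small' {X : C}
    (hX : ∀ (ι : Type v) [DecidableEq ι] (Y : ι → C),
      Function.Bijective (coproductComparison X Y))
    (hFX : ∀ (ι : Type v) [DecidableEq ι] (Y : ι → D),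
      Function.Bijective (coproductComparison (F.obj X) Y))
    {ι : Type v} (Y : ι → C) [PreservesColimitsOfShape (Discrete ι) F]
    (h : ∀ i, Good F X (Y i)) : Good F X (∐ Y) := by
  classical
  have hΦ : Function.Bijective (mapDS F X Y) := by
    constructor
    · intro a b hab
      refine DFunLike.ext _ _ fun j => ?_
      exact (h j).1 (show F.map (a j) = F.map (b j) by
        rw [← mapDS_apply, ← mapDS_apply, hab])
    · intro d
      refine ⟨DirectSum.mk (fun i => (X ⟶ Y i)) (DFinsupp.support d)
        (fun j => Function.surjInv (h j.1).2 (d j.1)), ?_⟩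
      refine DFunLike.ext _ _ fun j => ?_
      rw [mapDS_apply]
      by_cases hj : j ∈ DFinsupp.support d
      · rw [DirectSum.mk_apply_of_mem hj]
        exact Function.surjInv_eq (h j).2 (d j)
      · rw [DirectSum.mk_apply_of_notMem hj, F.map_zero]
        symm
        simpa using hj
  have hcmpC := hX ι Y
  have hcmpD := hFX ι (fun i => F.obj (Y i))
  have key : (fun f : X ⟶ ∐ Y => F.map f) ∘ ⇑(coproductComparison X Y)
      = (fun u : F.obj X ⟶ ∐ fun i => F.obj (Y i) =>
            u ≫ (asIso (sigmaComparison F Y)).hom) ∘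
          ⇑(coproductComparison (F.obj X) fun i => F.obj (Y i)) ∘ ⇑(mapDS F X Y) := by
    funext a
    simpa using comparison_natural F X Y a
  have h1 : Function.Bijective ((fun f : X ⟶ ∐ Y => F.map f) ∘ ⇑(coproductComparison X Y)) := by
    rw [key]
    exact (postcomp_bij (asIso (sigmaComparison F Y))).comp (hcmpD.comp hΦ)
  exact (Function.Bijective.of_comp_iff _ hcmpC).mp h1

open SmallGenAux in
lemma good_sigma_contra' {ι : Type v} (X : ι → C) (Y : C)
    [PreservesColimitsOfShape (Discrete ι) F]
    (h : ∀ i, Good F (X i) Y) : Good F (∐ X) Y := by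
  constructor
  · intro f g hfg
    apply Sigma.hom_ext
    intro i
    have hfg' : F.map f = F.map g := hfg
    exact (h i).1 (by
      show F.map (Sigma.ι X i ≫ f) = F.map (Sigma.ι X i ≫ g)
      rw [F.map_comp, F.map_comp, hfg'])
  · intro u
    have hc : IsColimit (F.mapCocone (Cofan.mk (∐ X) (Sigma.ι X))) :=
      isColimitOfPreserves F (coproductIsCoproduct X)
    refine ⟨Sigma.desc (fun i => Function.surjInv (h i).2 (F.map (Sigma.ι X i) ≫ u)), ?_⟩
    apply hc.hom_ext
    rintro ⟨i⟩
    have : (F.mapCocone (Cofan.mk (∐ X) (Sigma.ι X))).ι.app ⟨i⟩ = F.map (Sigma.ι X i) := rfl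
    rw [this]
    dsimp only
    rw [← F.map_comp, Sigma.ι_desc]
    exact Function.surjInv_eq (h i).2 _

end Coproducts

section Chase

variable {C : Type u} [Category.{v} C] [Preadditive C]
  [HasZeroObject C] [HasShift C ℤ] [∀ n : ℤ, (shiftFunctor C n).Additive] [Pretriangulated C]
  {D : Type u'} [Category.{v} D] [Preadditive D]
  [HasZeroObject D] [HasShift D ℤ] [∀ n : ℤ, (shiftFunctor D n).Additive] [Pretriangulated D]
  (F : C ⥤ D) [F.CommShift ℤ] [F.IsTriangulated]

lemma good_obj₃_cov (T : Triangle C) (hT : T ∈ distTriang C) (X : C)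
    (h₁ : Good F X T.obj₁) (h₂ : Good F X T.obj₂)
    (h₁' : Good F X (T.obj₁⟦(1 : ℤ)⟧)) (h₂' : Good F X (T.obj₂⟦(1 : ℤ)⟧)) :
    Good F X T.obj₃ := by
  have hmapT := F.map_distinguished T hT
  have hker : ∀ f : X ⟶ T.obj₃, F.map f = 0 → f = 0 := by
    intro f hf
    have h3 : f ≫ T.mor₃ = 0 := h₁'.1 (show F.map (f ≫ T.mor₃) = F.map 0 by
      rw [F.map_comp, hf, zero_comp, F.map_zero])
    obtain ⟨g, hg⟩ := Triangle.coyoneda_exact₃ T hT f h3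
    obtain ⟨k, hk⟩ := Triangle.coyoneda_exact₂ _ hmapT (F.map g) (by
      show F.map g ≫ F.map T.mor₂ = 0
      rw [← F.map_comp, ← hg, hf])
    obtain ⟨e', he'⟩ := h₁.2 k
    have he'' : F.map e' = k := he'
    have hge : g = e' ≫ T.mor₁ := h₂.1 (show F.map g = F.map (e' ≫ T.mor₁) by
      rw [F.map_comp, he'']
      exact hk)
    rw [hg, hge, Category.assoc, comp_distTriang_mor_zero₁₂ T hT, comp_zero]
  constructor
  · intro f g hfg
    have hfg' : F.map f = F.map g := hfg
    have := hker (f - g) (by rw [F.map_sub, hfg', sub_self])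
    exact sub_eq_zero.mp this
  · intro h
    obtain ⟨a, ha⟩ := h₁'.2 (h ≫ F.map T.mor₃)
    have ha' : F.map a = h ≫ F.map T.mor₃ := ha
    have ha0 : a ≫ T.mor₁⟦(1 : ℤ)⟧' = 0 := h₂'.1
      (show F.map (a ≫ T.mor₁⟦(1 : ℤ)⟧') = F.map 0 by
        rw [F.map_comp, ha', F.map_zero, Category.assoc, ← F.map_comp,
          comp_distTriang_mor_zero₃₁ T hT, F.map_zero, comp_zero])
    obtain ⟨b, hb⟩ := Triangle.coyoneda_exact₁ T hT a ha0
    obtain ⟨k, hk⟩ := Triangle.coyoneda_exact₃ _ hmapT (h - F.map b) (by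
      show (h - F.map b) ≫ (F.map T.mor₃ ≫ (F.commShiftIso (1 : ℤ)).hom.app T.obj₁) = 0
      have hbmor : F.map b ≫ F.map T.mor₃ = h ≫ F.map T.mor₃ := by
        rw [← F.map_comp, ← hb, ha']
      rw [Preadditive.sub_comp, ← Category.assoc, ← Category.assoc, hbmor, sub_self])
    obtain ⟨c, hc⟩ := h₂.2 k
    have hc' : F.map c = k := hc
    refine ⟨b + c ≫ T.mor₂, ?_⟩
    show F.map (b + c ≫ T.mor₂) = h
    have hk' : h - F.map b = k ≫ F.map T.mor₂ := hk
    erw [F.map_add, F.map_comp, hc', ← hk']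
    abel

lemma good_obj₃_contra (T : Triangle C) (hT : T ∈ distTriang C) (Y : C)
    (h₁ : Good F T.obj₁ Y) (h₂ : Good F T.obj₂ Y)
    (h₁' : Good F (T.obj₁⟦(1 : ℤ)⟧) Y) (h₂' : Good F (T.obj₂⟦(1 : ℤ)⟧) Y) :
    Good F T.obj₃ Y := by
  have hmapT := F.map_distinguished T hT
  have hker : ∀ f : T.obj₃ ⟶ Y, F.map f = 0 → f = 0 := by
    intro f hf
    have h2 : T.mor₂ ≫ f = 0 := h₂.1 (show F.map (T.mor₂ ≫ f) = F.map 0 by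
      rw [F.map_comp, hf, comp_zero, F.map_zero])
    obtain ⟨g, hg⟩ := Triangle.yoneda_exact₃ T hT f h2
    have hR := rot_of_distTriang _ hmapT
    obtain ⟨w, hw⟩ := Triangle.yoneda_exact₃ _ hR
      ((F.commShiftIso (1 : ℤ)).inv.app T.obj₁ ≫ F.map g) (by
        show (F.map T.mor₃ ≫ (F.commShiftIso (1 : ℤ)).hom.app T.obj₁) ≫
          ((F.commShiftIso (1 : ℤ)).inv.app T.obj₁ ≫ F.map g) = 0
        rw [Category.assoc, Iso.hom_inv_id_app_assoc, ← F.map_comp, ← hg, hf])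
    obtain ⟨v, hv⟩ := h₂'.2 ((F.commShiftIso (1 : ℤ)).hom.app T.obj₂ ≫ w)
    have hv' : F.map v = (F.commShiftIso (1 : ℤ)).hom.app T.obj₂ ≫ w := hv
    have hw' : (F.commShiftIso (1 : ℤ)).inv.app T.obj₁ ≫ F.map g
        = -((F.map T.mor₁)⟦(1 : ℤ)⟧') ≫ w := by erw [hw]; simp; exact Preadditive.neg_comp _ _
    have hgv : g = -(T.mor₁⟦(1 : ℤ)⟧' ≫ v) := h₁'.1
      (show F.map g = F.map (-(T.mor₁⟦(1 : ℤ)⟧' ≫ v)) by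
        have hFg : F.map g = (F.commShiftIso (1 : ℤ)).hom.app T.obj₁ ≫
            (-((F.map T.mor₁)⟦(1 : ℤ)⟧') ≫ w) := by
          rw [← hw', ← Category.assoc, Iso.hom_inv_id_app, Category.id_comp]
        symm
        erw [F.map_neg, F.map_comp, hv', ← Category.assoc,
          Functor.commShiftIso_hom_naturality, hFg]
        simp; exact Category.assoc _ _ _)
    rw [hg, hgv, Preadditive.comp_neg, ← Category.assoc,
      comp_distTriang_mor_zero₃₁ T hT, zero_comp, neg_zero]
  constructor
  · intro f g hfg
    have hfg' : F.map f = F.map g := hfg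
    have := hker (f - g) (by rw [F.map_sub, hfg', sub_self])
    exact sub_eq_zero.mp this
  · intro h
    obtain ⟨a, ha⟩ := h₂.2 (F.map T.mor₂ ≫ h)
    have ha' : F.map a = F.map T.mor₂ ≫ h := ha
    have h1a : T.mor₁ ≫ a = 0 := h₁.1 (show F.map (T.mor₁ ≫ a) = F.map 0 by
      rw [F.map_comp, ha', F.map_zero, ← Category.assoc, ← F.map_comp,
        comp_distTriang_mor_zero₁₂ T hT, F.map_zero, zero_comp])
    obtain ⟨b, hb⟩ := Triangle.yoneda_exact₂ T hT a h1a
    obtain ⟨g, hg⟩ := Triangle.yoneda_exact₃ _ hmapT (h - F.map b) (by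
      show F.map T.mor₂ ≫ (h - F.map b) = 0
      rw [Preadditive.comp_sub, ← ha', ← F.map_comp, ← hb, sub_self])
    obtain ⟨c, hc⟩ := h₁'.2 ((F.commShiftIso (1 : ℤ)).hom.app T.obj₁ ≫ g)
    have hc' : F.map c = (F.commShiftIso (1 : ℤ)).hom.app T.obj₁ ≫ g := hc
    refine ⟨b + T.mor₃ ≫ c, ?_⟩
    show F.map (b + T.mor₃ ≫ c) = h
    have hg' : h - F.map b
        = (F.map T.mor₃ ≫ (F.commShiftIso (1 : ℤ)).hom.app T.obj₁) ≫ g := hg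
    erw [F.map_add, F.map_comp, hc', ← Category.assoc, ← hg']
    abel

end Chase

end SmallGenAux

/-- Let `F : C ⥤ D` be an exact, coproduct-preserving functor between triangulated
categories with arbitrary coproducts.  If `C` has a small generator `P` such that
`F P` is a small generator of `D` and `F` induces bijections
`C(P⟦n⟧, P) → D((F P)⟦n⟧, F P)` for all integers `n`, then `F` is an equivalence of
categories. -/
theorem exact_functor_isEquivalence_of_small_generator
    {C : Type u} [Category.{v} C] [Preadditive C] [HasCoproducts.{v} C]
    [HasZeroObject C] [HasShift C ℤ] [∀ n : ℤ, (shiftFunctor C n).Additive]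
    [Pretriangulated C]
    {D : Type u'} [Category.{v} D] [Preadditive D] [HasCoproducts.{v} D]
    [HasZeroObject D] [HasShift D ℤ] [∀ n : ℤ, (shiftFunctor D n).Additive]
    [Pretriangulated D]
    (F : C ⥤ D) [F.CommShift ℤ] [F.IsTriangulated]
    (hpres : ∀ ι : Type v, PreservesColimitsOfShape (Discrete ι) F)
    (P : C) (hPsmall : IsSmallObject P) (hPgen : IsGenerator P)
    (hFPsmall : IsSmallObject (F.obj P)) (hFPgen : IsGenerator (F.obj P))
    (hfull : ∀ n : ℤ, Function.Bijective
      (fun f : P⟦n⟧ ⟶ P => (F.commShiftIso n).inv.app P ≫ F.map f)) :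
    F.IsEquivalence := by
  classical
  have hgoodPn : ∀ n : ℤ, SmallGenAux.Good F (P⟦n⟧) P := by
    intro n
    have h0 := hfull n
    have hpre : Function.Bijective (fun u : F.obj (P⟦n⟧) ⟶ F.obj P =>
        (F.commShiftIso n).inv.app P ≫ u) := by
      constructor
      · intro a b h
        simpa using congrArg (fun z => (F.commShiftIso n).hom.app P ≫ z) h
      · intro u
        exact ⟨(F.commShiftIso n).hom.app P ≫ u, by simp⟩
    exact (Function.Bijective.of_comp_iff' hpre _).mp h0
  have shiftSA : ∀ (Y : C), (∀ n : ℤ, SmallGenAux.Good F (P⟦n⟧) Y) →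
      ∀ (m n : ℤ), SmallGenAux.Good F (P⟦n⟧) (Y⟦m⟧) := by
    intro Y hY m n
    exact ((hY (n - m)).shift m).of_iso
      (((shiftFunctorAdd' C (n - m) m n (by ring)).app P).symm) (Iso.refl _)
  have SAloc : IsLocalizingClass {Y : C | ∀ n : ℤ, SmallGenAux.Good F (P⟦n⟧) Y} := by
    constructor
    · intro Y Y' e hY n
      exact (hY n).of_iso (Iso.refl _) e
    · intro Y m hY n
      exact shiftSA Y hY m n
    · intro T hT hT₁ hT₂ n
      exact SmallGenAux.good_obj₃_cov F T hT (P⟦n⟧) (hT₁ n) (hT₂ n)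
        (shiftSA _ hT₁ 1 n) (shiftSA _ hT₂ 1 n)
    · intro ι Y hY n
      haveI := hpres ι
      haveI : PreservesColimitsOfShape (Discrete ι) (shiftFunctor C (-n)) :=
        (Adjunction.leftAdjoint_preservesColimits
          (shiftFunctor C (-n)).asEquivalence.toAdjunction).preservesColimitsOfShape
      have h1 : ∀ i, SmallGenAux.Good F P ((Y i)⟦-n⟧) := fun i =>
        ((hY i n).shift (-n)).of_iso ((shiftFunctorCompIsoId C n (-n) (by ring)).app P)
          (Iso.refl _)
      have h2 : SmallGenAux.Good F P (∐ fun i => (Y i)⟦-n⟧) :=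
        SmallGenAux.good_sigma_of_small' F hPsmall hFPsmall _ h1
      have h3 : SmallGenAux.Good F P ((∐ Y)⟦-n⟧) :=
        h2.of_iso (Iso.refl _) (asIso (sigmaComparison (shiftFunctor C (-n)) Y))
      exact (h3.shift n).of_iso (Iso.refl _)
        ((shiftFunctorCompIsoId C (-n) n (by ring)).app (∐ Y))
  have hSA : ∀ (Y : C) (n : ℤ), SmallGenAux.Good F (P⟦n⟧) Y := fun Y =>
    hPgen _ SAloc hgoodPn Y
  have goodP : ∀ Y : C, SmallGenAux.Good F P Y := fun Y =>
    (hSA Y 0).of_iso ((shiftFunctorZero C ℤ).app P) (Iso.refl Y)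
  have shiftAll : ∀ (X : C), (∀ Y : C, SmallGenAux.Good F X Y) →
      ∀ (n : ℤ) (Y : C), SmallGenAux.Good F (X⟦n⟧) Y := by
    intro X hX n Y
    exact ((hX (Y⟦-n⟧)).shift n).of_iso (Iso.refl _)
      ((shiftFunctorCompIsoId C (-n) n (by ring)).app Y)
  have SBloc : IsLocalizingClass {X : C | ∀ Y : C, SmallGenAux.Good F X Y} := by
    constructor
    · intro X X' e hX Y
      exact (hX Y).of_iso e (Iso.refl Y)
    · intro X n hX Y
      exact shiftAll X hX n Y
    · intro T hT h₁ h₂ Y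
      exact SmallGenAux.good_obj₃_contra F T hT Y (h₁ Y) (h₂ Y)
        (shiftAll _ h₁ 1 Y) (shiftAll _ h₂ 1 Y)
    · intro ι X hX Y
      haveI := hpres ι
      exact SmallGenAux.good_sigma_contra' F X Y (fun i => hX i Y)
  have goodAll : ∀ X : C, ∀ Y : C, SmallGenAux.Good F X Y := hPgen _ SBloc goodP
  have hfaith : F.Faithful := ⟨fun {X Y} {f g} h => (goodAll X Y).1 h⟩
  have hfullF : F.Full := ⟨fun {X Y} f => (goodAll X Y).2 f⟩
  have SDloc : IsLocalizingClass {Z : D | ∃ X : C, Nonempty (F.obj X ≅ Z)} := by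
    constructor
    · rintro Z₁ Z₂ e ⟨X, ⟨i⟩⟩
      exact ⟨X, ⟨i ≪≫ e⟩⟩
    · rintro Z n ⟨X, ⟨i⟩⟩
      exact ⟨X⟦n⟧, ⟨(F.commShiftIso n).app X ≪≫ (shiftFunctor D n).mapIso i⟩⟩
    · rintro T hT ⟨X₁, ⟨e₁⟩⟩ ⟨X₂, ⟨e₂⟩⟩
      obtain ⟨g, hgg⟩ := (goodAll X₁ X₂).2 (e₁.hom ≫ T.mor₁ ≫ e₂.inv)
      have hgg' : F.map g = e₁.hom ≫ T.mor₁ ≫ e₂.inv := hgg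
      obtain ⟨Z₃, u, w, hT'⟩ := Pretriangulated.distinguished_cocone_triangle g
      have hmap := F.map_distinguished _ hT'
      have comm : (F.mapTriangle.obj (Triangle.mk g u w)).mor₁ ≫ e₂.hom
          = e₁.hom ≫ T.mor₁ := by
        change F.map g ≫ e₂.hom = _
        rw [hgg']
        simp
      have it := Pretriangulated.isoTriangleOfIso₁₂ _ _ hmap hT e₁ e₂ comm
      exact ⟨Z₃, ⟨(Pretriangulated.Triangle.π₃).mapIso it⟩⟩
    · intro ι Z hZ
      haveI := hpres ι
      have hZ' : ∀ i, ∃ X : C, Nonempty (F.obj X ≅ Z i) := hZ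
      choose X i using hZ'
      exact ⟨∐ X, ⟨(asIso (sigmaComparison F X)).symm ≪≫
        Sigma.mapIso (fun j => (i j).some)⟩⟩
  have hess : F.EssSurj := ⟨fun Z => hFPgen _ SDloc ⟨P, ⟨Iso.refl _⟩⟩ Z⟩
  exact { faithful := hfaith, full := hfullF, essSurj := hess }
end
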